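/- arXiv:2301.02106 — 3 statements merged into one kernel-verified Lean document; each statement's English description precedes it below -/
import Mathlib

section
/- For real numbers ℓ, L with L ≥ ℓ > 0 and ε₀ ≥ 1, the two inequalities 2ℓ − Lε₀ > 0 and ε₀ > (ℓε₀ + √(ℓ²ε₀² − 2ℓLε₀ + L²ε₀²)) / (2ℓ − Lε₀) cannot both hold. -/
theorem h2_inequalities_contradictory (ℓ L ε₀ : ℝ) (hℓL : ℓ ≤ L) (hℓ : 0 < ℓ)
    (hε₀ : ε₀ ≥ 1) :
    ¬ (2 * ℓ - L * ε₀ > 0 ∧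
      ε₀ > (ℓ * ε₀ + Real.sqrt (ℓ ^ 2 * ε₀ ^ 2 - 2 * ℓ * L * ε₀ + L ^ 2 * ε₀ ^ 2)) /
        (2 * ℓ - L * ε₀)) := by
  rintro ⟨h1, h2⟩
  have h3 := (div_lt_iff₀ h1).mp h2
  have hs := Real.sqrt_nonneg (ℓ ^ 2 * ε₀ ^ 2 - 2 * ℓ * L * ε₀ + L ^ 2 * ε₀ ^ 2)
  nlinarith [mul_le_mul_of_nonneg_left hℓL (le_trans zero_le_one hε₀),
    sq_nonneg ε₀, mul_pos hℓ (lt_of_lt_of_le zero_lt_one hε₀)]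
end

section
/- If a set T ⊂ ℝ³∖{0} satisfies Hypothesis H1 (compact, contained in a half space, ℓ = min_{x∈T}|x| > 0, and 2ℓc > L where c = min_{x,y∈T}⟨x/|x|, y/|y|⟩ and L = max_{x∈T}|x|), then T does not satisfy both inequalities 2ℓ − Lε₀ > 0 and ε₀ > (ℓε₀ + √(ℓ²ε₀² − 2ℓLε₀ + L²ε₀²))/(2ℓ − Lε₀), where ε₀ = (ℓ + √(ℓ² − 2Lℓc + L²))/(2ℓc − L). -/
open scoped RealInnerProductSpace

theorem H1_not_H2 (T : Set (EuclideanSpace ℝ (Fin 3))) (ℓ L c : ℝ)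
    (hTne : T.Nonempty) (hTcompact : IsCompact T) (h0T : (0 : EuclideanSpace ℝ (Fin 3)) ∉ T)
    (hhalf : ∃ v : EuclideanSpace ℝ (Fin 3), v ≠ 0 ∧ ∀ x ∈ T, 0 ≤ ⟪v, x⟫)
    (hℓmin : IsLeast ((fun x => ‖x‖) '' T) ℓ)
    (hLmax : IsGreatest ((fun x => ‖x‖) '' T) L)
    (hcmin : IsLeast ((fun p : EuclideanSpace ℝ (Fin 3) × EuclideanSpace ℝ (Fin 3) =>
      ⟪‖p.1‖⁻¹ • p.1, ‖p.2‖⁻¹ • p.2⟫) '' (T ×ˢ T)) c)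
    (hℓpos : 0 < ℓ) (hH1 : 2 * ℓ * c > L) :
    ¬ (2 * ℓ - L * ((ℓ + Real.sqrt (ℓ ^ 2 - 2 * L * ℓ * c + L ^ 2)) / (2 * ℓ * c - L)) > 0 ∧
      (ℓ + Real.sqrt (ℓ ^ 2 - 2 * L * ℓ * c + L ^ 2)) / (2 * ℓ * c - L) >
        (ℓ * ((ℓ + Real.sqrt (ℓ ^ 2 - 2 * L * ℓ * c + L ^ 2)) / (2 * ℓ * c - L)) +
          Real.sqrt (ℓ ^ 2 * ((ℓ + Real.sqrt (ℓ ^ 2 - 2 * L * ℓ * c + L ^ 2)) / (2 * ℓ * c - L)) ^ 2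
            - 2 * ℓ * L * ((ℓ + Real.sqrt (ℓ ^ 2 - 2 * L * ℓ * c + L ^ 2)) / (2 * ℓ * c - L))
            + L ^ 2 * ((ℓ + Real.sqrt (ℓ ^ 2 - 2 * L * ℓ * c + L ^ 2)) / (2 * ℓ * c - L)) ^ 2)) /
        (2 * ℓ - L * ((ℓ + Real.sqrt (ℓ ^ 2 - 2 * L * ℓ * c + L ^ 2)) / (2 * ℓ * c - L)))) := by
  -- Basic facts from the hypotheses
  obtain ⟨x0, hx0⟩ := hTne
  have hℓL : ℓ ≤ L := le_trans (hℓmin.2 ⟨x0, hx0, rfl⟩) (hLmax.2 ⟨x0, hx0, rfl⟩)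
  have hLpos : 0 < L := lt_of_lt_of_le hℓpos hℓL
  -- c ≤ 1 by Cauchy–Schwarz
  have hc1 : c ≤ 1 := by
    obtain ⟨⟨x, y⟩, ⟨hx, hy⟩, hcval⟩ := hcmin.1
    have hxn : 0 < ‖x‖ := lt_of_lt_of_le hℓpos (hℓmin.2 ⟨x, hx, rfl⟩)
    have hyn : 0 < ‖y‖ := lt_of_lt_of_le hℓpos (hℓmin.2 ⟨y, hy, rfl⟩)
    have h1 : ‖(‖x‖⁻¹ • x : EuclideanSpace ℝ (Fin 3))‖ = 1 := by
      rw [norm_smul, norm_inv, norm_norm, inv_mul_cancel₀ hxn.ne']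
    have h2 : ‖(‖y‖⁻¹ • y : EuclideanSpace ℝ (Fin 3))‖ = 1 := by
      rw [norm_smul, norm_inv, norm_norm, inv_mul_cancel₀ hyn.ne']
    calc c = ⟪‖x‖⁻¹ • x, ‖y‖⁻¹ • y⟫ := hcval.symm
      _ ≤ ‖(‖x‖⁻¹ • x : EuclideanSpace ℝ (Fin 3))‖ * ‖(‖y‖⁻¹ • y : EuclideanSpace ℝ (Fin 3))‖ :=
          real_inner_le_norm _ _
      _ = 1 := by rw [h1, h2, mul_one]
  -- arithmetic part
  set D : ℝ := ℓ ^ 2 - 2 * L * ℓ * c + L ^ 2 with hD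
  have hDnn : 0 ≤ D := by
    rw [hD]
    nlinarith [sq_nonneg (ℓ - L), mul_nonneg (mul_nonneg hLpos.le hℓpos.le) (sub_nonneg.2 hc1)]
  set s : ℝ := Real.sqrt D with hs
  have hsnn : 0 ≤ s := Real.sqrt_nonneg _
  have hs2 : s ^ 2 = D := Real.sq_sqrt hDnn
  have hsge : L - ℓ ≤ s := by
    nlinarith [hs2, hD, sq_nonneg (s - (L - ℓ)),
      mul_nonneg (mul_nonneg hLpos.le hℓpos.le) (sub_nonneg.2 hc1)]
  have hdpos : 0 < 2 * ℓ * c - L := by linarith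
  set e : ℝ := (ℓ + s) / (2 * ℓ * c - L) with he
  have he1 : 1 ≤ e := by
    rw [he, le_div_iff₀ hdpos]
    nlinarith [hsge, hℓL, hc1, hℓpos]
  rintro ⟨h1, h2⟩
  have hEnn : 0 ≤ ℓ ^ 2 * e ^ 2 - 2 * ℓ * L * e + L ^ 2 * e ^ 2 := by
    have he2 : e ≤ e ^ 2 := by nlinarith
    nlinarith [mul_nonneg (by positivity : (0:ℝ) ≤ ℓ ^ 2 + L ^ 2) (by linarith : 0 ≤ e ^ 2 - e),
      mul_nonneg (by linarith : (0:ℝ) ≤ e) (sq_nonneg (ℓ - L))]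
  set t : ℝ := Real.sqrt (ℓ ^ 2 * e ^ 2 - 2 * ℓ * L * e + L ^ 2 * e ^ 2) with ht
  have htnn : 0 ≤ t := Real.sqrt_nonneg _
  have ht2 : t ^ 2 = ℓ ^ 2 * e ^ 2 - 2 * ℓ * L * e + L ^ 2 * e ^ 2 := Real.sq_sqrt hEnn
  rw [gt_iff_lt, div_lt_iff₀ h1] at h2
  -- h2 : ℓ * e + t < e * (2 * ℓ - L * e)
  have hkey : t < ℓ * e - L * e ^ 2 := by nlinarith
  have hepos : 0 < e := lt_of_lt_of_le one_pos he1
  nlinarith [sq_nonneg t, mul_pos hLpos hepos, mul_pos (mul_pos hLpos hepos) hepos]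
end

section
/- Let ℓ, L > 0 with ℓ < L < 2ℓ. Then for unit vectors m with ⟨m, u⟩ > 0 (u a fixed unit vector), the inequality L/(2⟨m,u⟩) < ℓ(1−ε²)/(2ε(1−ε⟨m,u⟩)) holds for all such m if and only if L/2 < ℓ(1−ε²)/(2ε(1−ε)), i.e. if and only if ε < 1/(L/ℓ − 1); here ε > 1. -/
open scoped RealInnerProductSpace

theorem directrix_inside_hyperboloid_iff (ℓ L ε : ℝ) (u : EuclideanSpace ℝ (Fin 3))
    (hu : ‖u‖ = 1) (hℓ : 0 < ℓ) (hℓL : ℓ < L) (hL2 : L < 2 * ℓ) (hε : 1 < ε) :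
    ((∀ m : EuclideanSpace ℝ (Fin 3), ‖m‖ = 1 → 1 / ε < ⟪m, u⟫ →
        L / (2 * ⟪m, u⟫) < ℓ * (1 - ε ^ 2) / (2 * ε * (1 - ε * ⟪m, u⟫)))
      ↔ L / 2 < ℓ * (1 - ε ^ 2) / (2 * ε * (1 - ε))) ∧
    (L / 2 < ℓ * (1 - ε ^ 2) / (2 * ε * (1 - ε)) ↔ ε < 1 / (L / ℓ - 1)) := by
  have hε0 : (0:ℝ) < ε := by linarith
  have key : (L / 2 < ℓ * (1 - ε ^ 2) / (2 * ε * (1 - ε))) ↔ ε * (L - ℓ) < ℓ := by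
    have h1 : ℓ * (1 - ε ^ 2) / (2 * ε * (1 - ε)) = ℓ * (1 + ε) / (2 * ε) := by
      rw [div_eq_div_iff (by nlinarith) (by positivity)]
      ring
    rw [h1, div_lt_div_iff₀ (by norm_num) (by positivity)]
    constructor <;> intro h <;> nlinarith
  constructor
  · constructor
    · intro hall
      have huu : ⟪u, u⟫ = 1 := by
        rw [real_inner_self_eq_norm_sq, hu]; norm_num
      have := hall u hu (by rw [huu]; exact (div_lt_one hε0).2 hε)
      rw [huu] at this
      simpa using this
    · intro h m hm hmu
      set t : ℝ := ⟪m, u⟫ with ht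
      have ht1 : t ≤ 1 := by
        calc t ≤ ‖m‖ * ‖u‖ := real_inner_le_norm m u
        _ = 1 := by rw [hm, hu]; norm_num
      have htpos : 0 < t := lt_trans (by positivity) hmu
      have hεt : 1 < ε * t := by
        have := (div_lt_iff₀ hε0).1 hmu
        linarith [this]
      have hC : ε * (L - ℓ) < ℓ := key.1 h
      have hrw : ℓ * (1 - ε ^ 2) / (2 * ε * (1 - ε * t))
          = ℓ * (ε ^ 2 - 1) / (2 * ε * (ε * t - 1)) := by
        rw [div_eq_div_iff (by nlinarith) (by nlinarith)]
        ring
      rw [hrw, div_lt_div_iff₀ (by positivity) (by nlinarith)]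
      have h1 : 0 < (ε - 1) * (ℓ - ε * (L - ℓ)) :=
        mul_pos (by linarith) (by linarith)
      have h2 : 0 ≤ (1 - t) * ((L - ℓ) * ε ^ 2 + ℓ) :=
        mul_nonneg (by linarith) (by nlinarith)
      nlinarith [h1, h2]
  · rw [key]
    have hden : 0 < L / ℓ - 1 := by
      rw [sub_pos, lt_div_iff₀ hℓ]; linarith
    rw [lt_div_iff₀ hden]
    constructor <;> intro h
    · calc ε * (L / ℓ - 1) = ε * (L - ℓ) / ℓ := by field_simp
        _ < 1 := by rw [div_lt_one hℓ]; linarith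
    · have : ε * (L - ℓ) / ℓ < 1 := by
        calc ε * (L - ℓ) / ℓ = ε * (L / ℓ - 1) := by field_simp
          _ < 1 := h
      rw [div_lt_one hℓ] at this; linarith
end
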